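/- For every n ≥ 1, the Clifford group (the normalizer of the n-qubit Pauli group P_n in U(2^n)) is not dense in the unitary group U(2^n); that is, the topological closure of the Clifford group is a proper subset of U(2^n). In particular, the Clifford group is not universal for quantum computation on n qubits. -/

import Mathlib

open Matrix Complex

/-- The matrix of the Pauli `X` operator acting on the `j`-th qubit of `n` qubits
(and as the identity on all other tensor factors). -/
noncomputable def XMat (n : ℕ) (j : Fin n) :
    Matrix (Fin n → Fin 2) (Fin n → Fin 2) ℂ :=
  Matrix.of fun v w => if v j ≠ w j ∧ ∀ i, i ≠ j → v i = w i then 1 else 0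

/-- The matrix of the Pauli `Z` operator acting on the `j`-th qubit of `n` qubits
(and as the identity on all other tensor factors). -/
noncomputable def ZMat (n : ℕ) (j : Fin n) :
    Matrix (Fin n → Fin 2) (Fin n → Fin 2) ℂ :=
  Matrix.of fun v w => if v = w then (if v j = 1 then -1 else 1) else 0

/-- The `n`-qubit Pauli group: the subgroup of the unitary group `U(2^n)` generated by
`i·I` together with `X_j` and `Z_j` for each qubit `j`. -/
noncomputable def PauliGroup (n : ℕ) :
    Subgroup (Matrix.unitaryGroup (Fin n → Fin 2) ℂ) :=
  Subgroup.closure { U : Matrix.unitaryGroup (Fin n → Fin 2) ℂ |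
    (U : Matrix (Fin n → Fin 2) (Fin n → Fin 2) ℂ)
        = Complex.I • (1 : Matrix (Fin n → Fin 2) (Fin n → Fin 2) ℂ)
    ∨ ∃ j : Fin n, (U : Matrix (Fin n → Fin 2) (Fin n → Fin 2) ℂ) = XMat n j
        ∨ (U : Matrix (Fin n → Fin 2) (Fin n → Fin 2) ℂ) = ZMat n j }

/-! ### Auxiliary material -/

/-- The Gaussian integers inside `ℂ`, as a subring. -/
def GRing : Subring ℂ where
  carrier := {z | ∃ a b : ℤ, z = (a : ℂ) + (b : ℂ) * Complex.I}
  zero_mem' := ⟨0, 0, by simp⟩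
  one_mem' := ⟨1, 0, by simp⟩
  add_mem' := by
    rintro x y ⟨a, b, rfl⟩ ⟨c, d, rfl⟩
    exact ⟨a + c, b + d, by push_cast; ring⟩
  neg_mem' := by
    rintro x ⟨a, b, rfl⟩
    exact ⟨-a, -b, by push_cast; ring⟩
  mul_mem' := by
    rintro x y ⟨a, b, rfl⟩ ⟨c, d, rfl⟩
    refine ⟨a * c - b * d, a * d + b * c, ?_⟩
    push_cast
    linear_combination ((b : ℂ) * d) * Complex.I_sq

lemma GRing.mem_iff {z : ℂ} :
    z ∈ GRing ↔ ∃ a b : ℤ, z = (a : ℂ) + (b : ℂ) * Complex.I := Iff.rfl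

lemma GRing.star_mem {z : ℂ} (h : z ∈ GRing) : star z ∈ GRing := by
  obtain ⟨a, b, rfl⟩ := h
  refine ⟨a, -b, ?_⟩
  push_cast
  simp [Complex.ext_iff]

lemma GRing.I_mem : Complex.I ∈ GRing := ⟨0, 1, by simp⟩

lemma GRing.isClosed : IsClosed (GRing : Set ℂ) := by
  have h1 : (GRing : Set ℂ) =
      Complex.re ⁻¹' (Set.range ((↑) : ℤ → ℝ)) ∩
      Complex.im ⁻¹' (Set.range ((↑) : ℤ → ℝ)) := by
    ext z
    constructor
    · rintro ⟨a, b, rfl⟩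
      constructor <;> simp
    · rintro ⟨⟨a, ha⟩, ⟨b, hb⟩⟩
      exact ⟨a, b, by simp [Complex.ext_iff, ha, hb]⟩
  rw [h1]
  exact (Int.isClosedEmbedding_coe_real.isClosed_range.preimage Complex.continuous_re).inter
    (Int.isClosedEmbedding_coe_real.isClosed_range.preimage Complex.continuous_im)

lemma fin2_add : ∀ a b : Fin 2, a ≠ b → b = a + 1 := by decide

lemma fin2_succ_ne : ∀ a : Fin 2, a + 1 ≠ a := by decide

lemma fin2_add_add : ∀ a : Fin 2, a + 1 + 1 = a := by decide

lemma XMat_apply (n : ℕ) (j : Fin n) (v w : Fin n → Fin 2) :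
    XMat n j v w = if w = Function.update v j (v j + 1) then 1 else 0 := by
  have : (v j ≠ w j ∧ ∀ i, i ≠ j → v i = w i) ↔ w = Function.update v j (v j + 1) := by
    constructor
    · rintro ⟨h1, h2⟩
      funext i
      by_cases hi : i = j
      · subst hi; rw [Function.update_self]; exact fin2_add _ _ h1
      · rw [Function.update_of_ne hi]; exact (h2 i hi).symm
    · rintro rfl
      refine ⟨?_, fun i hi => ?_⟩
      · rw [Function.update_self]; exact (fin2_succ_ne _).symm
      · rw [Function.update_of_ne hi]
  simp only [XMat, Matrix.of_apply, this]

lemma sigma_inj (n : ℕ) (j : Fin n) {v w : Fin n → Fin 2}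
    (h : Function.update v j (v j + 1) = Function.update w j (w j + 1)) : v = w := by
  funext i
  by_cases hi : i = j
  · subst hi
    have := congrFun h i
    rw [Function.update_self, Function.update_self] at this
    have h2 := congrArg (· + 1) this
    simpa [fin2_add_add] using h2
  · have := congrFun h i
    rwa [Function.update_of_ne hi, Function.update_of_ne hi] at this

lemma XMat_mem (n : ℕ) (j : Fin n) : XMat n j ∈ Matrix.unitaryGroup (Fin n → Fin 2) ℂ := by
  rw [Matrix.mem_unitaryGroup_iff]
  ext v w
  rw [Matrix.star_eq_conjTranspose, Matrix.mul_apply]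
  simp only [Matrix.conjTranspose_apply, XMat_apply, Matrix.one_apply]
  rw [Finset.sum_congr rfl (fun u _ => by
    rw [show (star (if u = Function.update w j (w j + 1) then (1:ℂ) else 0)) =
      (if u = Function.update w j (w j + 1) then (1:ℂ) else 0) by simp [apply_ite]])]
  simp only [ite_mul, one_mul, zero_mul, Finset.sum_ite_eq, Finset.mem_univ, if_true]
  by_cases h : v = w
  · subst h; simp
  · rw [if_neg h]
    refine Finset.sum_eq_zero fun u _ => ?_
    split_ifs with h1 h2
    · exact absurd (sigma_inj n j (h1.symm.trans h2)) h
    · rfl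
    · rfl

lemma pauli_entries (n : ℕ) {U : Matrix.unitaryGroup (Fin n → Fin 2) ℂ}
    (hU : U ∈ PauliGroup n) (v w : Fin n → Fin 2) :
    (U : Matrix (Fin n → Fin 2) (Fin n → Fin 2) ℂ) v w ∈ GRing := by
  let K : Subgroup (Matrix.unitaryGroup (Fin n → Fin 2) ℂ) :=
    { carrier := {U | ∀ v w, (U : Matrix (Fin n → Fin 2) (Fin n → Fin 2) ℂ) v w ∈ GRing}
      one_mem' := by
        intro v w
        rw [Matrix.UnitaryGroup.one_val, Matrix.one_apply]
        split_ifs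
        · exact one_mem _
        · exact zero_mem _
      mul_mem' := by
        intro a b ha hb v w
        rw [Matrix.UnitaryGroup.mul_val, Matrix.mul_apply]
        exact Subring.sum_mem _ fun u _ => mul_mem (ha v u) (hb u w)
      inv_mem' := by
        intro a ha v w
        rw [Matrix.UnitaryGroup.inv_val, Matrix.star_eq_conjTranspose,
          Matrix.conjTranspose_apply]
        exact GRing.star_mem (ha w v) }
  have hle : PauliGroup n ≤ K := by
    rw [PauliGroup, Subgroup.closure_le]
    rintro U (h | ⟨j, h | h⟩) <;> intro v w <;> rw [h]
    · rw [Matrix.smul_apply, Matrix.one_apply, smul_eq_mul]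
      split_ifs
      · simpa using GRing.I_mem
      · simpa using zero_mem GRing
    · rw [XMat_apply]
      split_ifs
      · exact one_mem _
      · exact zero_mem _
    · simp only [ZMat, Matrix.of_apply]
      split_ifs
      · exact neg_mem (one_mem _)
      · exact one_mem _
      · exact zero_mem _
  exact hle hU v w

/-- The Clifford group (the normalizer of the `n`-qubit Pauli group in `U(2^n)`) is not
dense in the unitary group `U(2^n)`: its topological closure is a proper subset of
`U(2^n)`.  In particular, the Clifford group is not universal for quantum computation. -/
theorem clifford_not_dense (n : ℕ) (hn : 1 ≤ n) :
    closure ((Subgroup.normalizer (PauliGroup n : Set (Matrix.unitaryGroup (Fin n → Fin 2) ℂ)) :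
        Subgroup (Matrix.unitaryGroup (Fin n → Fin 2) ℂ)) :
        Set (Matrix.unitaryGroup (Fin n → Fin 2) ℂ))
      ⊂ (Set.univ : Set (Matrix.unitaryGroup (Fin n → Fin 2) ℂ)) := by
  rw [Set.ssubset_univ_iff]
  intro hcl
  set j : Fin n := ⟨0, hn⟩
  -- the X generator as a unitary
  set Xe : Matrix.unitaryGroup (Fin n → Fin 2) ℂ := ⟨XMat n j, XMat_mem n j⟩ with hXe
  have hXP : Xe ∈ PauliGroup n :=
    Subgroup.subset_closure (Or.inr ⟨j, Or.inl rfl⟩)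
  -- the closed set containing the normalizer
  set N : Set (Matrix.unitaryGroup (Fin n → Fin 2) ℂ) :=
    {U | ∀ v w, ((U : Matrix (Fin n → Fin 2) (Fin n → Fin 2) ℂ) * XMat n j *
      (U : Matrix (Fin n → Fin 2) (Fin n → Fin 2) ℂ)ᴴ) v w ∈ GRing} with hN
  have hNclosed : IsClosed N := by
    have : N = ⋂ v, ⋂ w, (fun U : Matrix.unitaryGroup (Fin n → Fin 2) ℂ =>
        ((U : Matrix (Fin n → Fin 2) (Fin n → Fin 2) ℂ) * XMat n j *
          (U : Matrix (Fin n → Fin 2) (Fin n → Fin 2) ℂ)ᴴ) v w) ⁻¹' (GRing : Set ℂ) := by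
      ext U
      simp [hN, Set.mem_iInter]
    rw [this]
    refine isClosed_iInter fun v => isClosed_iInter fun w => ?_
    refine GRing.isClosed.preimage ?_
    exact (((continuous_subtype_val.matrix_mul continuous_const).matrix_mul
      continuous_subtype_val.matrix_conjTranspose).matrix_elem v w)
  have hsub : ((Subgroup.normalizer (PauliGroup n : Set (Matrix.unitaryGroup (Fin n → Fin 2) ℂ)) :
      Subgroup (Matrix.unitaryGroup (Fin n → Fin 2) ℂ)) :
      Set (Matrix.unitaryGroup (Fin n → Fin 2) ℂ)) ⊆ N := by
    intro U hU
    intro v w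
    have h1 : U * Xe * U⁻¹ ∈ PauliGroup n :=
      (Subgroup.mem_normalizer_iff.mp hU Xe).mp hXP
    have h2 := pauli_entries n h1 v w
    have h3 : ((U * Xe * U⁻¹ : Matrix.unitaryGroup (Fin n → Fin 2) ℂ) :
        Matrix (Fin n → Fin 2) (Fin n → Fin 2) ℂ) =
        (U : Matrix (Fin n → Fin 2) (Fin n → Fin 2) ℂ) * XMat n j *
        (U : Matrix (Fin n → Fin 2) (Fin n → Fin 2) ℂ)ᴴ := by
      rw [Matrix.UnitaryGroup.mul_val, Matrix.UnitaryGroup.mul_val,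
        Matrix.UnitaryGroup.inv_val, Matrix.star_eq_conjTranspose]
    rwa [h3] at h2
  have hclN : (Set.univ : Set (Matrix.unitaryGroup (Fin n → Fin 2) ℂ)) ⊆ N := by
    rw [← hcl]
    exact closure_minimal hsub hNclosed
  -- the T-like diagonal gate
  set r : ℝ := Real.sqrt 2 / 2 with hr
  set ω : ℂ := (r : ℂ) + (r : ℂ) * Complex.I with hω
  have hrsq : (r : ℝ) ^ 2 = 1 / 2 := by
    rw [hr, div_pow, Real.sq_sqrt (by norm_num : (0:ℝ) ≤ 2)]
    norm_num
  have hωstar : ω * star ω = 1 := by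
    have hsc : star ω = (r : ℂ) - (r : ℂ) * Complex.I := by
      simp [hω, Complex.ext_iff]
    have hrc : ((r : ℝ) : ℂ) ^ 2 * 2 = 1 := by
      have : (((r : ℝ) : ℂ)) ^ 2 * 2 = ((r ^ 2 * 2 : ℝ) : ℂ) := by push_cast; ring
      rw [this, hrsq]
      norm_num
    rw [hsc]
    linear_combination hrc - ((r : ℝ) : ℂ) ^ 2 * Complex.I_sq
  set d : (Fin n → Fin 2) → ℂ := fun v => if v j = 1 then ω else 1 with hd
  have hdunit : ∀ v, d v * star (d v) = 1 := by
    intro v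
    by_cases h : v j = 1
    · simp only [hd, if_pos h]; exact hωstar
    · simp [hd, h]
  have hDmem : Matrix.diagonal d ∈ Matrix.unitaryGroup (Fin n → Fin 2) ℂ := by
    rw [Matrix.mem_unitaryGroup_iff, Matrix.star_eq_conjTranspose,
      Matrix.diagonal_conjTranspose, Matrix.diagonal_mul_diagonal]
    ext v w
    rcases eq_or_ne v w with rfl | hvw
    · rw [Matrix.diagonal_apply_eq, Matrix.one_apply_eq]
      exact hdunit v
    · rw [Matrix.diagonal_apply_ne _ hvw, Matrix.one_apply_ne hvw]
  have hωnot : ω ∉ GRing := by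
    rintro ⟨a, b, hab⟩
    have hre := congrArg Complex.re hab
    simp only [hω, Complex.add_re, Complex.ofReal_re, Complex.mul_re, Complex.intCast_re,
      Complex.I_re, Complex.I_im, Complex.intCast_im, Complex.ofReal_im] at hre
    norm_num at hre
    -- hre : r = a
    have hsq2 : Real.sqrt 2 ^ 2 = 2 := Real.sq_sqrt (by norm_num)
    have h0 : (0 : ℝ) < r := by
      rw [hr]
      positivity
    have h1 : r < 1 := by
      rw [hr]
      nlinarith [Real.sqrt_nonneg 2]
    rw [hre] at h0 h1
    have ha0 : (0 : ℤ) < a := by exact_mod_cast h0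
    have ha1 : a < 1 := by exact_mod_cast h1
    omega
  -- evaluate the conjugated entry
  set v : Fin n → Fin 2 := fun _ => 1 with hv
  set w : Fin n → Fin 2 := Function.update v j (v j + 1) with hw
  have hmem := hclN (Set.mem_univ (⟨Matrix.diagonal d, hDmem⟩ :
    Matrix.unitaryGroup (Fin n → Fin 2) ℂ)) v w
  have hentry : ((Matrix.diagonal d) * XMat n j * (Matrix.diagonal d)ᴴ) v w = ω := by
    rw [Matrix.diagonal_conjTranspose, Matrix.mul_diagonal, Matrix.diagonal_mul,
      XMat_apply]
    have hXvw : (if w = Function.update v j (v j + 1) then (1 : ℂ) else 0) = 1 :=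
      if_pos hw
    have hdv : d v = ω := by
      rw [hd]
      exact if_pos rfl
    have hwj : w j = 0 := by
      rw [hw, Function.update_self]
      rfl
    have hdw : d w = 1 := by
      rw [hd]
      simp only [hwj]
      norm_num
    rw [hXvw, hdv, Pi.star_apply, hdw]
    simp
  rw [hentry] at hmem
  exact hωnot hmem
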